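/- For every z∈ℂ with Im z ≠ 0 there exists a sequence u:ℤ→ℂ, not identically zero, satisfying a_{n−1}u_{n−1} + b_n u_n + a_n u_{n+1} = z u_n for all n∈ℤ and Σ_{n≥0}|u_n|² < ∞. Any two such sequences are scalar multiples of one another, and every such nonzero sequence satisfies u_n ≠ 0 for all n∈ℤ; in particular there is a unique such sequence normalized by u_0 = 1. The analogous existence, uniqueness up to scalars, and nonvanishing statements hold with the condition Σ_{n≤0}|u_n|² < ∞. -/

import Mathlib

open MeasureTheory Filter Topology Complex
open scoped ComplexConjugate ENNReal

noncomputable section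

local notation "ℓ²ℤ" => lp (fun _ : ℤ => ℂ) 2
local notation "ℓ²ℕ" => lp (fun _ : ℕ => ℂ) 2
local notation "⟪" x ", " y "⟫" => @inner ℂ _ _ x y

/-- The standard basis vector `δ_n` of `ℓ²(ℤ)`. -/
def delta (n : ℤ) : ℓ²ℤ := lp.single 2 n 1

/-- The standard basis vector indexed by `k` of the half-line space `ℓ²(ℕ)`. -/
def deltaN (k : ℕ) : ℓ²ℕ := lp.single 2 k 1

/-- `u` solves the difference equation `a_{n-1}u_{n-1} + b_n u_n + a_n u_{n+1} = z u_n`. -/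
def IsSolution (a b : ℤ → ℝ) (z : ℂ) (u : ℤ → ℂ) : Prop :=
  ∀ n : ℤ, (a (n - 1) : ℂ) * u (n - 1) + (b n : ℂ) * u n + (a n : ℂ) * u (n + 1) = z * u n

/-- `Σ_{n ≥ 0} |u_n|² < ∞`. -/
def L2AtPlus (u : ℤ → ℂ) : Prop := Summable fun k : ℕ => ‖u (k : ℤ)‖ ^ 2

/-- `Σ_{n ≤ 0} |u_n|² < ∞`. -/
def L2AtMinus (u : ℤ → ℂ) : Prop := Summable fun k : ℕ => ‖u (-(k : ℤ))‖ ^ 2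

/-- `up z` is the Weyl solution `u^+(z)`, `ℓ²` at `+∞`, normalized by `u_0 = 1`. -/
def IsWeylPlus (a b : ℤ → ℝ) (up : ℂ → ℤ → ℂ) : Prop :=
  ∀ z : ℂ, 0 < z.im → IsSolution a b z (up z) ∧ L2AtPlus (up z) ∧ up z 0 = 1

/-- `um z` is the Weyl solution `u^-(z)`, `ℓ²` at `-∞`, normalized by `u_0 = 1`. -/
def IsWeylMinus (a b : ℤ → ℝ) (um : ℂ → ℤ → ℂ) : Prop :=
  ∀ z : ℂ, 0 < z.im → IsSolution a b z (um z) ∧ L2AtMinus (um z) ∧ um z 0 = 1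

/-- The Wronskian `W(z) = a_0 (u_1^+ u_0^- - u_1^- u_0^+)`. -/
def Wfun (a : ℤ → ℝ) (up um : ℂ → ℤ → ℂ) (z : ℂ) : ℂ :=
  (a 0 : ℂ) * (up z 1 * um z 0 - um z 1 * up z 0)

namespace Weyl

lemma rpow_two_eq (x : ℝ) : x ^ ((2:ℝ≥0∞)).toReal = x ^ 2 := by
  have : ((2:ℝ≥0∞)).toReal = ((2:ℕ):ℝ) := by simp
  rw [this, Real.rpow_natCast]

lemma memℓp_two_iff (f : ℤ → ℂ) : Memℓp f 2 ↔ Summable fun n => ‖f n‖ ^ 2 := by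
  have he : (fun n : ℤ => ‖f n‖ ^ ((2:ℝ≥0∞)).toReal) = fun n => ‖f n‖ ^ 2 :=
    funext fun n => rpow_two_eq _
  constructor
  · intro h
    have := h.summable (by rw [show ((2:ℝ≥0∞)).toReal = 2 by simp]; norm_num)
    rwa [he] at this
  · intro h
    exact memℓp_gen (by rw [he]; exact h)

lemma summable_sq (f : ℓ²ℤ) : Summable fun n : ℤ => ‖f n‖ ^ 2 :=
  (memℓp_two_iff f).mp (lp.memℓp f)

lemma mulShift_mem (c : ℤ → ℂ) {C : ℝ} (hc : ∀ n, ‖c n‖ ≤ C) (e : ℤ ≃ ℤ) (f : ℓ²ℤ) :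
    Memℓp (fun n => c n * f (e n)) 2 := by
  rw [memℓp_two_iff]
  have h0 : Summable fun n : ℤ => ‖f (e n)‖ ^ 2 := (summable_sq f).comp_injective e.injective
  refine (h0.mul_left (C ^ 2)).of_nonneg_of_le (fun n => by positivity) (fun n => ?_)
  rw [norm_mul, mul_pow]
  exact mul_le_mul_of_nonneg_right (by nlinarith [norm_nonneg (c n), hc n]) (by positivity)

/-- multiplication-and-shift operator on `ℓ²(ℤ)` -/
def mulShiftL (c : ℤ → ℂ) {C : ℝ} (hc : ∀ n, ‖c n‖ ≤ C) (e : ℤ ≃ ℤ) : ℓ²ℤ →L[ℂ] ℓ²ℤ :=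
  LinearMap.mkContinuous
    { toFun := fun f => ⟨fun n => c n * f (e n), mulShift_mem c hc e f⟩
      map_add' := fun f g => by
        ext n
        simp only [lp.coeFn_add, Pi.add_apply]
        exact mul_add _ _ _
      map_smul' := fun r f => by
        ext n
        simp only [lp.coeFn_smul, Pi.smul_apply, RingHom.id_apply, smul_eq_mul]
        ring }
    C
    (by
      intro f
      have hC0 : 0 ≤ C := le_trans (norm_nonneg (c 0)) (hc 0)
      set g : ℓ²ℤ := ⟨fun n => c n * f (e n), mulShift_mem c hc e f⟩ with hg
      have hgn : ∀ n, ‖g n‖ ^ 2 ≤ C ^ 2 * ‖f (e n)‖ ^ 2 := by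
        intro n
        have : ‖g n‖ = ‖c n * f (e n)‖ := rfl
        rw [this, norm_mul, mul_pow]
        exact mul_le_mul_of_nonneg_right (by nlinarith [norm_nonneg (c n), hc n]) (by positivity)
      have hsq : ‖g‖ ^ 2 ≤ (C * ‖f‖) ^ 2 := by
        have h1 : ‖g‖ ^ 2 = ∑' n, ‖g n‖ ^ 2 := by
          have := lp.norm_rpow_eq_tsum (p := 2) (by simp) g
          simpa [rpow_two_eq] using this
        have h2 : ‖f‖ ^ 2 = ∑' n, ‖f (e n)‖ ^ 2 := by
          have h3 := lp.norm_rpow_eq_tsum (p := 2) (by simp) f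
          have h4 : ∑' n, ‖f (e n)‖ ^ 2 = ∑' n : ℤ, ‖f n‖ ^ 2 := by
            simpa using e.tsum_eq (fun n => ‖f n‖ ^ 2)
          rw [h4]
          simpa [rpow_two_eq] using h3
        rw [h1, mul_pow, h2, ← tsum_mul_left]
        exact Summable.tsum_le_tsum hgn
          (((summable_sq g)))
          (((summable_sq f).comp_injective e.injective).mul_left _)
      calc ‖g‖ ≤ C * ‖f‖ := by
            refine le_of_pow_le_pow_left₀ two_ne_zero (by positivity) hsq)

lemma mulShiftL_apply (c : ℤ → ℂ) {C : ℝ} (hc : ∀ n, ‖c n‖ ≤ C) (e : ℤ ≃ ℤ) (f : ℓ²ℤ) (n : ℤ) :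
    (mulShiftL c hc e f) n = c n * f (e n) := rfl


section Jop

variable (a b : ℤ → ℝ) (C : ℝ)

/-- The Jacobi operator. -/
def Jop (ha1 : ∀ n : ℤ, ‖((a n : ℝ) : ℂ)‖ ≤ C) (hb1 : ∀ n : ℤ, ‖((b n : ℝ) : ℂ)‖ ≤ C) :
    ℓ²ℤ →L[ℂ] ℓ²ℤ :=
  mulShiftL (fun n => ((a (n - 1) : ℝ) : ℂ)) (fun n => ha1 (n - 1)) (Equiv.subRight 1) +
    (mulShiftL (fun n => ((b n : ℝ) : ℂ)) hb1 (Equiv.refl ℤ) +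
      mulShiftL (fun n => ((a n : ℝ) : ℂ)) ha1 (Equiv.addRight 1))

lemma Jop_apply (ha1) (hb1) (f : ℓ²ℤ) (n : ℤ) :
    (Jop a b C ha1 hb1 f) n
      = (a (n - 1) : ℂ) * f (n - 1) + (b n : ℂ) * f n + (a n : ℂ) * f (n + 1) := by
  simp only [Jop, ContinuousLinearMap.add_apply, lp.coeFn_add, Pi.add_apply,
    mulShiftL_apply, Equiv.subRight_apply, Equiv.refl_apply, Equiv.coe_addRight]
  ring

lemma Jop_isSymm (ha1) (hb1) :
    (Jop a b C ha1 hb1 : ℓ²ℤ →ₗ[ℂ] ℓ²ℤ).IsSymmetric := by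
  set A1 := mulShiftL (fun n => ((a (n - 1) : ℝ) : ℂ)) (fun n => ha1 (n - 1)) (Equiv.subRight 1)
    with hA1
  set A2 := mulShiftL (fun n => ((b n : ℝ) : ℂ)) hb1 (Equiv.refl ℤ) with hA2
  set A3 := mulShiftL (fun n => ((a n : ℝ) : ℂ)) ha1 (Equiv.addRight 1) with hA3
  have key : ∀ f g : ℓ²ℤ, ⟪A1 f, g⟫ = ⟪f, A3 g⟫ := by
    intro f g
    rw [lp.inner_eq_tsum, lp.inner_eq_tsum]
    simp only [RCLike.inner_apply]
    rw [← (Equiv.addRight (1:ℤ)).tsum_eq (fun n => (g n : ℂ) * (starRingEnd ℂ) ((A1 f) n))]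
    apply tsum_congr
    intro n
    simp only [RCLike.inner_apply, hA1, hA3, mulShiftL_apply, Equiv.subRight_apply,
      Equiv.coe_addRight, add_sub_cancel_right, map_mul, Complex.conj_ofReal]
    ring
  have key2 : ∀ f g : ℓ²ℤ, ⟪A2 f, g⟫ = ⟪f, A2 g⟫ := by
    intro f g
    rw [lp.inner_eq_tsum, lp.inner_eq_tsum]
    simp only [RCLike.inner_apply]
    apply tsum_congr
    intro n
    simp only [hA2, mulShiftL_apply, Equiv.refl_apply, map_mul,
      Complex.conj_ofReal]
    ring
  have key3 : ∀ f g : ℓ²ℤ, ⟪A3 f, g⟫ = ⟪f, A1 g⟫ := by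
    intro f g
    calc ⟪A3 f, g⟫ = (starRingEnd ℂ) ⟪g, A3 f⟫ := (inner_conj_symm _ _).symm
      _ = (starRingEnd ℂ) ⟪A1 g, f⟫ := by rw [key g f]
      _ = ⟪f, A1 g⟫ := inner_conj_symm _ _
  intro f g
  simp only [ContinuousLinearMap.coe_coe, Jop, ContinuousLinearMap.add_apply,
    inner_add_left, inner_add_right, ← hA1, ← hA2, ← hA3, key, key2, key3]
  ring

lemma exists_psi (ha1 : ∀ n : ℤ, ‖((a n : ℝ) : ℂ)‖ ≤ C)
    (hb1 : ∀ n : ℤ, ‖((b n : ℝ) : ℂ)‖ ≤ C) (z : ℂ) (hz : z.im ≠ 0) :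
    ∃ ψ : ℤ → ℂ, Summable (fun n : ℤ => ‖ψ n‖ ^ 2) ∧
      (∀ n : ℤ, n ≠ 0 →
        (a (n - 1) : ℂ) * ψ (n - 1) + (b n : ℂ) * ψ n + (a n : ℂ) * ψ (n + 1) = z * ψ n) ∧
      ψ 0 ≠ 0 := by
  set J := Jop a b C ha1 hb1 with hJ
  have hsa : IsSelfAdjoint J :=
    ContinuousLinearMap.isSelfAdjoint_iff_isSymmetric.mpr (Jop_isSymm a b C ha1 hb1)
  have hznot : z ∉ spectrum ℂ J := by
    intro hmem
    have := hsa.mem_spectrum_eq_re hmem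
    apply hz
    rw [this]
    simp
  have hunit : IsUnit (algebraMap ℂ (ℓ²ℤ →L[ℂ] ℓ²ℤ) z - J) := spectrum.notMem_iff.mp hznot
  set ψ : ℓ²ℤ := (↑hunit.unit⁻¹ : ℓ²ℤ →L[ℂ] ℓ²ℤ) (lp.single 2 0 1) with hψ
  have happ : z • ψ - J ψ = lp.single 2 0 1 := by
    have h0 : ((algebraMap ℂ (ℓ²ℤ →L[ℂ] ℓ²ℤ) z - J) * (↑hunit.unit⁻¹ : ℓ²ℤ →L[ℂ] ℓ²ℤ))
        = 1 := hunit.mul_val_inv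
    have h1 : (algebraMap ℂ (ℓ²ℤ →L[ℂ] ℓ²ℤ) z - J) ψ = lp.single 2 0 1 := by
      rw [hψ, ← ContinuousLinearMap.mul_apply, h0, ContinuousLinearMap.one_apply]
    rw [← h1]
    rw [Algebra.algebraMap_eq_smul_one]
    simp [ContinuousLinearMap.sub_apply, ContinuousLinearMap.smul_apply,
      ContinuousLinearMap.one_apply]
  have hψne : ψ ≠ 0 := by
    intro h0
    rw [h0] at happ
    have : (0 : ℓ²ℤ) = lp.single 2 0 1 := by simpa using happ
    have h2 := congrArg (fun v : ℓ²ℤ => (v : ℤ → ℂ) 0) this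
    simp only [lp.coeFn_zero, Pi.zero_apply] at h2
    rw [lp.single_apply_self] at h2
    exact one_ne_zero h2.symm
  have hpt : ∀ n : ℤ, z * ψ n - (J ψ) n = (lp.single 2 0 (1:ℂ) : ℤ → ℂ) n := by
    intro n
    have h2 := congrArg (fun v : ℓ²ℤ => (v : ℤ → ℂ) n) happ
    simpa only [lp.coeFn_sub, lp.coeFn_smul, Pi.sub_apply, Pi.smul_apply, smul_eq_mul] using h2
  have hJψ : J ψ = z • ψ - lp.single 2 0 1 := by
    rw [← happ]; abel
  have him : (⟪ψ, J ψ⟫).im = 0 := by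
    have hsym := Jop_isSymm a b C ha1 hb1 ψ ψ
    simp only [ContinuousLinearMap.coe_coe, ← hJ] at hsym
    have hconj : (starRingEnd ℂ) ⟪ψ, J ψ⟫ = ⟪ψ, J ψ⟫ :=
      (inner_conj_symm (𝕜 := ℂ) (J ψ) ψ).trans hsym
    exact Complex.conj_eq_iff_im.mp hconj
  have hval : ⟪ψ, J ψ⟫ = z * ((‖ψ‖ ^ 2 : ℝ) : ℂ) - (starRingEnd ℂ) (ψ 0) := by
    have hns : (⟪ψ, ψ⟫ : ℂ) = ((‖ψ‖ ^ 2 : ℝ) : ℂ) := by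
      rw [inner_self_eq_norm_sq_to_K]; norm_cast
    have hsing : ⟪ψ, lp.single 2 0 (1:ℂ)⟫ = (starRingEnd ℂ) (ψ 0) := by
      rw [lp.inner_single_right]
      simp [RCLike.inner_apply]
    rw [hJψ, inner_sub_right, inner_smul_right, hns, hsing]
  have heq : z.im * ‖ψ‖ ^ 2 + (ψ 0).im = 0 := by
    have := him
    rw [hval] at this
    simp only [Complex.sub_im, Complex.mul_im, Complex.ofReal_re, Complex.ofReal_im,
      Complex.conj_im] at this
    linarith
  have hψ0 : ψ 0 ≠ 0 := by
    intro h0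
    rw [h0] at heq
    simp only [Complex.zero_im, add_zero, mul_eq_zero] at heq
    rcases heq with h | h
    · exact hz h
    · have : ‖ψ‖ = 0 := by
        have := sq_eq_zero_iff.mp h
        exact this
      exact hψne (norm_eq_zero.mp this)
  refine ⟨(ψ : ℤ → ℂ), summable_sq ψ, ?_, hψ0⟩
  intro n hn
  have h1 := hpt n
  rw [lp.single_apply_ne 2 0 _ hn] at h1
  have h2 := Jop_apply a b C ha1 hb1 ψ n
  rw [h2] at h1
  linear_combination -h1
end Jop

section Sol

variable {a b : ℤ → ℝ} {z : ℂ} {u v : ℤ → ℂ}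

lemma sol_ext_fwd (ha : ∀ n, 0 < a n) (hu : IsSolution a b z u) {n : ℤ}
    (h0 : u (n - 1) = 0) (h1 : u n = 0) : u (n + 1) = 0 := by
  have h := hu n
  rw [h0, h1] at h
  simp only [mul_zero, add_zero, zero_add] at h
  have han : ((a n : ℝ) : ℂ) ≠ 0 := by exact_mod_cast (ha n).ne'
  exact (mul_eq_zero.mp h).resolve_left han

lemma sol_ext_bwd (ha : ∀ n, 0 < a n) (hu : IsSolution a b z u) {n : ℤ}
    (h1 : u n = 0) (h2 : u (n + 1) = 0) : u (n - 1) = 0 := by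
  have h := hu n
  rw [h1, h2] at h
  simp only [mul_zero, add_zero, zero_add] at h
  have han : ((a (n - 1) : ℝ) : ℂ) ≠ 0 := by exact_mod_cast (ha (n - 1)).ne'
  exact (mul_eq_zero.mp h).resolve_left han

lemma sol_eq_zero (ha : ∀ n, 0 < a n) (hu : IsSolution a b z u) {m : ℤ}
    (h0 : u m = 0) (h1 : u (m + 1) = 0) : ∀ n, u n = 0 := by
  have fwd : ∀ k : ℕ, u (m + k) = 0 ∧ u (m + k + 1) = 0 := by
    intro k
    induction k with
    | zero => simpa using ⟨h0, h1⟩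
    | succ k ih =>
      constructor
      · have h2 := ih.2
        convert h2 using 2
        push_cast; ring
      · have h3 : u (m + k + 1 + 1) = 0 := by
          apply sol_ext_fwd ha hu (n := m + k + 1) ?_ ih.2
          rw [show m + (k : ℤ) + 1 - 1 = m + k by ring]
          exact ih.1
        convert h3 using 2
        push_cast; ring
  have bwd : ∀ k : ℕ, u (m - k) = 0 ∧ u (m - k + 1) = 0 := by
    intro k
    induction k with
    | zero => simpa using ⟨h0, h1⟩
    | succ k ih =>
      constructor
      · have h3 : u (m - k - 1) = 0 := by
          apply sol_ext_bwd ha hu (n := m - k) ih.1 ih.2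
        convert h3 using 2
        push_cast; ring
      · have h2 := ih.1
        convert h2 using 2
        push_cast; ring
  intro n
  rcases le_total m n with h | h
  · have h4 := (fwd (n - m).toNat).1
    rwa [show m + ((n - m).toNat : ℤ) = n by omega] at h4
  · have h4 := (bwd (m - n).toNat).1
    rwa [show m - ((m - n).toNat : ℤ) = n by omega] at h4

/-- boundary quantity for the Green identity -/
def Fim (a : ℤ → ℝ) (u : ℤ → ℂ) (n : ℤ) : ℝ :=
  ((a n : ℂ) * (starRingEnd ℂ) (u n) * u (n + 1)).im

lemma norm_sq_c (x : ℂ) : ‖x‖ ^ 2 = x.re * x.re + x.im * x.im := by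
  rw [Complex.sq_norm, Complex.normSq_apply]

lemma Fim_step (hu : IsSolution a b z u) (n : ℤ) :
    Fim a u n - Fim a u (n - 1) = z.im * ‖u n‖ ^ 2 := by
  have h := hu n
  have h1 := congrArg Complex.re h
  have h2 := congrArg Complex.im h
  simp only [Complex.add_re, Complex.add_im, Complex.mul_re, Complex.mul_im,
    Complex.ofReal_re, Complex.ofReal_im] at h1 h2
  simp only [Fim, Complex.mul_re, Complex.mul_im, Complex.conj_re, Complex.conj_im,
    Complex.ofReal_re, Complex.ofReal_im, norm_sq_c, show n - 1 + 1 = n from by ring]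
  ring_nf
  ring_nf at h1 h2
  linear_combination (u n).re * h2 - (u n).im * h1

lemma Fim_sum (hu : IsSolution a b z u) (n₀ : ℤ) : ∀ K : ℕ,
    z.im * (∑ k ∈ Finset.range (K + 1), ‖u (n₀ + k)‖ ^ 2)
      = Fim a u (n₀ + K) - Fim a u (n₀ - 1) := by
  intro K
  induction K with
  | zero => simpa using (Fim_step hu n₀).symm
  | succ K ih =>
    rw [Finset.sum_range_succ, mul_add, ih]
    have h := Fim_step hu (n₀ + K + 1)
    rw [show n₀ + (K : ℤ) + 1 - 1 = n₀ + K by ring] at h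
    rw [show (((K : ℕ) + 1 : ℕ) : ℤ) = (K : ℤ) + 1 by push_cast; ring]
    rw [show n₀ + ((K : ℤ) + 1) = n₀ + K + 1 by ring]
    linarith

lemma tendsto_Fim {C : ℝ} (ha : ∀ n, 0 < a n) (hCa : ∀ n, a n ≤ C) (n₀ : ℤ)
    (hS : Summable fun k : ℕ => ‖u (n₀ + k)‖ ^ 2) :
    Tendsto (fun K : ℕ => Fim a u (n₀ + K)) atTop (𝓝 0) := by
  have hg : Tendsto (fun k : ℕ => ‖u (n₀ + k)‖ ^ 2) atTop (𝓝 0) := hS.tendsto_atTop_zero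
  have hg' : Tendsto (fun k : ℕ => ‖u (n₀ + (k + 1 : ℕ))‖ ^ 2) atTop (𝓝 0) :=
    hg.comp (tendsto_add_atTop_nat 1)
  have hlim : Tendsto (fun k : ℕ =>
      C * (‖u (n₀ + k)‖ ^ 2 + ‖u (n₀ + (k + 1 : ℕ))‖ ^ 2)) atTop (𝓝 0) := by
    have := (hg.add hg').const_mul C
    simpa using this
  apply squeeze_zero_norm ?_ hlim
  intro K
  have hb1 : |Fim a u (n₀ + K)| ≤ ‖((a (n₀ + K) : ℝ) : ℂ) * (starRingEnd ℂ) (u (n₀ + K))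
      * u (n₀ + K + 1)‖ := by
    exact Complex.abs_im_le_norm _
  have hb2 : ‖((a (n₀ + K) : ℝ) : ℂ) * (starRingEnd ℂ) (u (n₀ + K)) * u (n₀ + K + 1)‖
      = a (n₀ + K) * (‖u (n₀ + K)‖ * ‖u (n₀ + K + 1)‖) := by
    simp only [norm_mul, RCLike.norm_conj, Complex.norm_real, Real.norm_eq_abs,
      abs_of_pos (ha (n₀ + K))]
    ring
  have he : n₀ + ((K + 1 : ℕ) : ℤ) = n₀ + K + 1 := by push_cast; ring
  rw [Real.norm_eq_abs, he]
  have hCK := hCa (n₀ + K)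
  have h0 := ha (n₀ + K)
  nlinarith [norm_nonneg (u (n₀ + K)), norm_nonneg (u (n₀ + K + 1)),
    sq_nonneg (‖u (n₀ + K)‖ - ‖u (n₀ + K + 1)‖),
    mul_nonneg (norm_nonneg (u (n₀ + K))) (norm_nonneg (u (n₀ + K + 1))), hb1, hb2]

lemma shift_summable (h : L2AtPlus u) (n₀ : ℤ) :
    Summable fun k : ℕ => ‖u (n₀ + k)‖ ^ 2 := by
  have h1 : Summable fun k : ℕ => ‖u (k : ℤ)‖ ^ 2 := h
  rw [← summable_nat_add_iff n₀.natAbs]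
  have hg : Function.Injective (fun k : ℕ => (n₀ + k + n₀.natAbs).toNat) := by
    intro i j hij
    simp only at hij
    omega
  have h2 := h1.comp_injective hg
  apply h2.congr
  intro k
  have hnn : ((n₀ + k + n₀.natAbs).toNat : ℤ) = n₀ + ((k + n₀.natAbs : ℕ) : ℤ) := by omega
  simp only [Function.comp_apply, hnn]

lemma key_plus {C : ℝ} (ha : ∀ n, 0 < a n) (hCa : ∀ n, a n ≤ C)
    (hu : IsSolution a b z u) (hL2 : L2AtPlus u) (n₀ : ℤ) :
    z.im * (∑' k : ℕ, ‖u (n₀ + k)‖ ^ 2) = - Fim a u (n₀ - 1) := by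
  have hS := shift_summable hL2 n₀
  have hps := hS.hasSum.tendsto_sum_nat
  have h1 : Tendsto (fun K : ℕ => z.im * ∑ k ∈ Finset.range (K + 1), ‖u (n₀ + k)‖ ^ 2)
      atTop (𝓝 (z.im * ∑' k : ℕ, ‖u (n₀ + k)‖ ^ 2)) :=
    (hps.comp (tendsto_add_atTop_nat 1)).const_mul z.im
  have h2 : Tendsto (fun K : ℕ => Fim a u (n₀ + K) - Fim a u (n₀ - 1)) atTop
      (𝓝 (0 - Fim a u (n₀ - 1))) := (tendsto_Fim ha hCa n₀ hS).sub_const _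
  have h3 : Tendsto (fun K : ℕ => z.im * ∑ k ∈ Finset.range (K + 1), ‖u (n₀ + k)‖ ^ 2)
      atTop (𝓝 (0 - Fim a u (n₀ - 1))) := by
    apply h2.congr
    intro K
    exact (Fim_sum hu n₀ K).symm
  have := tendsto_nhds_unique h1 h3
  linarith

/-- Wronskian of two solutions -/
def Wr (a : ℤ → ℝ) (u v : ℤ → ℂ) (n : ℤ) : ℂ :=
  (a n : ℂ) * (u (n + 1) * v n - v (n + 1) * u n)

lemma Wr_step (hu : IsSolution a b z u) (hv : IsSolution a b z v) (n : ℤ) :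
    Wr a u v n = Wr a u v (n - 1) := by
  have h1 := hu n
  have h2 := hv n
  simp only [Wr, show n - 1 + 1 = n from by ring]
  linear_combination v n * h1 - u n * h2

lemma Wr_nat (hu : IsSolution a b z u) (hv : IsSolution a b z v) :
    ∀ K : ℕ, Wr a u v K = Wr a u v 0 := by
  intro K
  induction K with
  | zero => norm_num
  | succ K ih =>
    have h := Wr_step hu hv ((K : ℤ) + 1)
    rw [show (K : ℤ) + 1 - 1 = (K : ℤ) by ring] at h
    rw [show (((K : ℕ) + 1 : ℕ) : ℤ) = (K : ℤ) + 1 by push_cast; ring]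
    rw [h, ih]

lemma Wr_eq_zero {C : ℝ} (ha : ∀ n, 0 < a n) (hCa : ∀ n, a n ≤ C)
    (hu : IsSolution a b z u) (hv : IsSolution a b z v)
    (hus : L2AtPlus u) (hvs : L2AtPlus v) : Wr a u v 0 = 0 := by
  have hgu : Tendsto (fun k : ℕ => ‖u (k : ℤ)‖ ^ 2) atTop (𝓝 0) := hus.tendsto_atTop_zero
  have hgv : Tendsto (fun k : ℕ => ‖v (k : ℤ)‖ ^ 2) atTop (𝓝 0) := hvs.tendsto_atTop_zero
  have hgu' : Tendsto (fun k : ℕ => ‖u ((k + 1 : ℕ) : ℤ)‖ ^ 2) atTop (𝓝 0) :=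
    hgu.comp (tendsto_add_atTop_nat 1)
  have hgv' : Tendsto (fun k : ℕ => ‖v ((k + 1 : ℕ) : ℤ)‖ ^ 2) atTop (𝓝 0) :=
    hgv.comp (tendsto_add_atTop_nat 1)
  have hlim : Tendsto (fun k : ℕ => C * ((‖u (k : ℤ)‖ ^ 2 + ‖u ((k + 1 : ℕ) : ℤ)‖ ^ 2)
      + (‖v (k : ℤ)‖ ^ 2 + ‖v ((k + 1 : ℕ) : ℤ)‖ ^ 2))) atTop (𝓝 0) := by
    have := ((hgu.add hgu').add (hgv.add hgv')).const_mul C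
    simpa using this
  have htend : Tendsto (fun K : ℕ => Wr a u v K) atTop (𝓝 0) := by
    apply squeeze_zero_norm ?_ hlim
    intro K
    have he : ((K + 1 : ℕ) : ℤ) = (K : ℤ) + 1 := by push_cast; ring
    rw [he]
    have hb : ‖Wr a u v K‖ ≤ a K * (‖u ((K : ℤ) + 1)‖ * ‖v (K : ℤ)‖
        + ‖v ((K : ℤ) + 1)‖ * ‖u (K : ℤ)‖) := by
      rw [Wr]
      calc ‖((a (K : ℤ) : ℝ) : ℂ) * (u ((K : ℤ) + 1) * v (K : ℤ)
            - v ((K : ℤ) + 1) * u (K : ℤ))‖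
          = a (K : ℤ) * ‖u ((K : ℤ) + 1) * v (K : ℤ) - v ((K : ℤ) + 1) * u (K : ℤ)‖ := by
            rw [norm_mul, Complex.norm_real, Real.norm_eq_abs, abs_of_pos (ha _)]
        _ ≤ a (K : ℤ) * (‖u ((K : ℤ) + 1) * v (K : ℤ)‖ + ‖v ((K : ℤ) + 1) * u (K : ℤ)‖) := by
            apply mul_le_mul_of_nonneg_left (norm_sub_le _ _) (le_of_lt (ha _))
        _ = a (K : ℤ) * (‖u ((K : ℤ) + 1)‖ * ‖v (K : ℤ)‖
            + ‖v ((K : ℤ) + 1)‖ * ‖u (K : ℤ)‖) := by rw [norm_mul, norm_mul]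
    have h0 := ha (K : ℤ)
    have hCK := hCa (K : ℤ)
    nlinarith [norm_nonneg (u (K : ℤ)), norm_nonneg (v (K : ℤ)),
      norm_nonneg (u ((K : ℤ) + 1)), norm_nonneg (v ((K : ℤ) + 1)),
      sq_nonneg (‖u ((K : ℤ) + 1)‖ - ‖v (K : ℤ)‖),
      sq_nonneg (‖v ((K : ℤ) + 1)‖ - ‖u (K : ℤ)‖),
      mul_nonneg (norm_nonneg (u ((K : ℤ) + 1))) (norm_nonneg (v (K : ℤ))),
      mul_nonneg (norm_nonneg (v ((K : ℤ) + 1))) (norm_nonneg (u (K : ℤ)))]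
  have hconst : Tendsto (fun K : ℕ => Wr a u v K) atTop (𝓝 (Wr a u v 0)) := by
    have : (fun K : ℕ => Wr a u v K) = fun _ : ℕ => Wr a u v 0 := funext (Wr_nat hu hv)
    rw [this]
    exact tendsto_const_nhds
  exact tendsto_nhds_unique hconst htend

end Sol

section Master

/-- backward extension recursion -/
def bwdRec (a b : ℤ → ℝ) (z : ℂ) (x y : ℂ) : ℕ → ℂ × ℂ :=
  fun k => Nat.rec (x, y)
    (fun k p => (p.2, ((z - (b (1 - (k : ℤ)) : ℂ)) * p.2 - ((a (1 - (k : ℤ)) : ℝ) : ℂ) * p.1)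
      / ((a (-(k : ℤ)) : ℝ) : ℂ))) k

lemma l2_smul {u : ℤ → ℂ} (c : ℂ) (h : L2AtPlus u) : L2AtPlus (fun n => c * u n) :=
  (h.mul_left (‖c‖ ^ 2)).congr fun k => by rw [norm_mul, mul_pow]

lemma sol_smul {a b : ℤ → ℝ} {z : ℂ} {u : ℤ → ℂ} (c : ℂ) (h : IsSolution a b z u) :
    IsSolution a b z (fun n => c * u n) := fun n => by
  have := h n
  simp only
  linear_combination c * this

lemma master (a b : ℤ → ℝ) (ha : ∀ n, 0 < a n) (C : ℝ) (hCa : ∀ n, a n ≤ C)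
    (hCb : ∀ n, |b n| ≤ C) (z : ℂ) (hz : z.im ≠ 0) :
    (∃ u : ℤ → ℂ, u ≠ 0 ∧ IsSolution a b z u ∧ L2AtPlus u) ∧
    (∀ u v : ℤ → ℂ, u ≠ 0 → IsSolution a b z u → L2AtPlus u →
      v ≠ 0 → IsSolution a b z v → L2AtPlus v → ∃ c : ℂ, v = fun n => c * u n) ∧
    (∀ u : ℤ → ℂ, u ≠ 0 → IsSolution a b z u → L2AtPlus u → ∀ n : ℤ, u n ≠ 0) ∧
    (∃! u : ℤ → ℂ, IsSolution a b z u ∧ L2AtPlus u ∧ u 0 = 1) := by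
  -- nonvanishing
  have nonvanish : ∀ u : ℤ → ℂ, u ≠ 0 → IsSolution a b z u → L2AtPlus u → ∀ n : ℤ, u n ≠ 0 := by
    intro u hune husol huL2 n₀
    intro h0
    have hkey := key_plus ha hCa husol huL2 n₀
    have hFim : Fim a u (n₀ - 1) = 0 := by
      rw [Fim, show n₀ - 1 + 1 = n₀ from by ring, h0, mul_zero]
      simp
    rw [hFim] at hkey
    have hT : (∑' k : ℕ, ‖u (n₀ + k)‖ ^ 2) = 0 := by
      have := mul_eq_zero.mp (by linarith : z.im * (∑' k : ℕ, ‖u (n₀ + k)‖ ^ 2) = 0)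
      exact this.resolve_left hz
    have hS := shift_summable huL2 n₀
    have hterm : ∀ j : ℕ, ‖u (n₀ + j)‖ ^ 2 = 0 := by
      intro j
      have h1 : ‖u (n₀ + j)‖ ^ 2 ≤ ∑' k : ℕ, ‖u (n₀ + k)‖ ^ 2 :=
        Summable.le_tsum hS j (fun k _ => by positivity)
      have h2 : (0 : ℝ) ≤ ‖u (n₀ + j)‖ ^ 2 := by positivity
      linarith [hT ▸ h1]
    have h1 : u (n₀ + 1) = 0 := by
      have := hterm 1
      have := pow_eq_zero_iff (n := 2) (by norm_num) |>.mp this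
      rwa [norm_eq_zero, show n₀ + ((1 : ℕ) : ℤ) = n₀ + 1 by norm_num] at this
    have hall := sol_eq_zero ha husol h0 h1
    exact hune (funext hall)
  -- uniqueness up to scalars
  have uniq : ∀ u v : ℤ → ℂ, u ≠ 0 → IsSolution a b z u → L2AtPlus u →
      v ≠ 0 → IsSolution a b z v → L2AtPlus v → ∃ c : ℂ, v = fun n => c * u n := by
    intro u v hune husol huL2 hvne hvsol hvL2
    have hu0 : u 0 ≠ 0 := nonvanish u hune husol huL2 0
    have hW := Wr_eq_zero ha hCa husol hvsol huL2 hvL2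
    refine ⟨v 0 / u 0, ?_⟩
    have ha0 : ((a (0 : ℤ) : ℝ) : ℂ) ≠ 0 := by exact_mod_cast (ha 0).ne'
    -- from the vanishing Wronskian, v 1 * u 0 = u 1 * v 0
    have hW0 : u 1 * v 0 - v 1 * u 0 = 0 := by
      rw [Wr] at hW
      norm_num at hW
      rcases hW with h | h
      · exact absurd h (by exact_mod_cast (ha 0).ne')
      · linear_combination h
    set w : ℤ → ℂ := fun n => v n - (v 0 / u 0) * u n with hwdef
    have hwsol : IsSolution a b z w := by
      intro n
      have h1 := husol n
      have h2 := hvsol n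
      simp only [hwdef]
      linear_combination h2 - (v 0 / u 0) * h1
    have hw0 : w 0 = 0 := by
      simp only [hwdef]
      field_simp
      simp
    have hw1 : w 1 = 0 := by
      simp only [hwdef]
      field_simp
      simp
      linear_combination -hW0
    have hw1' : w ((0 : ℤ) + 1) = 0 := by rw [zero_add]; exact hw1
    have hall := sol_eq_zero ha hwsol hw0 hw1'
    funext n
    have := hall n
    simp only [hwdef] at this
    linear_combination this
  -- existence
  have exist : ∃ u : ℤ → ℂ, u ≠ 0 ∧ IsSolution a b z u ∧ L2AtPlus u := by
    have ha1 : ∀ n : ℤ, ‖((a n : ℝ) : ℂ)‖ ≤ C := by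
      intro n
      rw [Complex.norm_real, Real.norm_eq_abs, abs_of_pos (ha n)]
      exact hCa n
    have hb1 : ∀ n : ℤ, ‖((b n : ℝ) : ℂ)‖ ≤ C := by
      intro n
      rw [Complex.norm_real, Real.norm_eq_abs]
      exact hCb n
    obtain ⟨ψ, hψsum, hψeq, hψ0⟩ := exists_psi a b C ha1 hb1 z hz
    set w : ℕ → ℂ × ℂ := bwdRec a b z (ψ 2) (ψ 1) with hwdef
    set u : ℤ → ℂ := fun n => if 2 ≤ n then ψ n else (w (1 - n).toNat).2 with hudef
    have hu1 : ∀ m : ℤ, 1 ≤ m → u m = ψ m := by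
      intro m hm
      by_cases h : 2 ≤ m
      · simp only [hudef, if_pos h]
      · have hm1 : m = 1 := by omega
        subst hm1
        simp only [hudef, if_neg h]
        rfl
    have hu2 : ∀ k : ℕ, u (1 - k) = (w k).2 := by
      intro k
      have h : ¬ (2 ≤ 1 - (k : ℤ)) := by omega
      simp only [hudef, if_neg h]
      rw [show (1 - (1 - (k : ℤ))).toNat = k by omega]
    have hu3 : ∀ k : ℕ, u (2 - k) = (w k).1 := by
      intro k
      cases k with
      | zero =>
        have h : (2 : ℤ) ≤ 2 - ((0 : ℕ) : ℤ) := by norm_num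
        simp only [hudef, if_pos h]
        norm_num
        rfl
      | succ k =>
        rw [show (2 : ℤ) - ((k + 1 : ℕ) : ℤ) = 1 - (k : ℤ) by push_cast; ring]
        rw [hu2 k]
        rfl
    have husol : IsSolution a b z u := by
      intro n
      rcases le_or_gt n 1 with hn | hn
      · set k := (1 - n).toNat with hk
        have hkn : (k : ℤ) = 1 - n := by omega
        have e1 : u (n - 1) = (w (k + 1)).2 := by
          rw [show n - 1 = 1 - ((k + 1 : ℕ) : ℤ) by omega]
          exact hu2 (k + 1)
        have e2 : u n = (w k).2 := by
          rw [show n = 1 - (k : ℤ) by omega]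
          exact hu2 k
        have e3 : u (n + 1) = (w k).1 := by
          rw [show n + 1 = 2 - (k : ℤ) by omega]
          exact hu3 k
        have ea : a (n - 1) = a (-(k : ℤ)) := by rw [show n - 1 = -(k : ℤ) by omega]
        have eb : b n = b (1 - (k : ℤ)) := by rw [show n = 1 - (k : ℤ) by omega]
        have ea2 : a n = a (1 - (k : ℤ)) := by rw [show n = 1 - (k : ℤ) by omega]
        have hrec : (w (k + 1)).2 = ((z - (b (1 - (k : ℤ)) : ℂ)) * (w k).2
            - ((a (1 - (k : ℤ)) : ℝ) : ℂ) * (w k).1) / ((a (-(k : ℤ)) : ℝ) : ℂ) := rfl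
        have han : ((a (-(k : ℤ)) : ℝ) : ℂ) ≠ 0 := by exact_mod_cast (ha _).ne'
        rw [e1, e2, e3, ea, eb, ea2, hrec]
        field_simp
        ring
      · have e1 : u (n - 1) = ψ (n - 1) := hu1 _ (by omega)
        have e2 : u n = ψ n := hu1 _ (by omega)
        have e3 : u (n + 1) = ψ (n + 1) := hu1 _ (by omega)
        rw [e1, e2, e3]
        exact hψeq n (by omega)
    have huL2 : L2AtPlus u := by
      rw [L2AtPlus, ← summable_nat_add_iff 1]
      have h2 : Summable fun k : ℕ => ‖ψ ((k : ℤ) + 1)‖ ^ 2 := by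
        have hinj : Function.Injective (fun k : ℕ => (k : ℤ) + 1) := by
          intro i j hij
          simpa using hij
        exact hψsum.comp_injective hinj
      apply h2.congr
      intro k
      rw [hu1 ((k + 1 : ℕ) : ℤ) (by omega)]
      norm_num
    have hu0 : u 0 = ψ 0 := by
      have h1 := husol 1
      have h2 := hψeq 1 (by norm_num)
      rw [hu1 1 le_rfl, hu1 (1 + 1) (by norm_num)] at h1
      norm_num at h1 h2
      have ha0 : ((a (0 : ℤ) : ℝ) : ℂ) ≠ 0 := by exact_mod_cast (ha 0).ne'
      have h3 : ((a (0 : ℤ) : ℝ) : ℂ) * u 0 = ((a (0 : ℤ) : ℝ) : ℂ) * ψ 0 := by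
        linear_combination h1 - h2
      exact mul_left_cancel₀ ha0 h3
    refine ⟨u, ?_, husol, huL2⟩
    intro hzero
    apply hψ0
    rw [← hu0, hzero]
    rfl
  -- normalized solution
  refine ⟨exist, uniq, nonvanish, ?_⟩
  obtain ⟨u, hune, husol, huL2⟩ := exist
  have hu0 : u 0 ≠ 0 := nonvanish u hune husol huL2 0
  refine ⟨fun n => (u 0)⁻¹ * u n, ⟨sol_smul _ husol, l2_smul _ huL2, inv_mul_cancel₀ hu0⟩, ?_⟩
  intro y ⟨hy1, hy2, hy3⟩
  have hyne : y ≠ 0 := by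
    intro h
    rw [h] at hy3
    simp only [Pi.zero_apply] at hy3
    exact one_ne_zero hy3.symm
  have hwne : (fun n => (u 0)⁻¹ * u n) ≠ 0 := by
    intro h
    have := congrFun h 0
    simp only [Pi.zero_apply] at this
    rw [inv_mul_cancel₀ hu0] at this
    exact one_ne_zero this
  obtain ⟨c, hc⟩ := uniq (fun n => (u 0)⁻¹ * u n) y hwne (sol_smul _ husol) (l2_smul _ huL2)
    hyne hy1 hy2
  have hc0 := congrFun hc 0
  try simp only at hc0
  rw [hy3, inv_mul_cancel₀ hu0, mul_one] at hc0
  rw [hc, ← hc0]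
  funext n
  simp

end Master

section Refl

variable {a b : ℤ → ℝ} {z : ℂ} {u : ℤ → ℂ}

lemma refl_sol (h : IsSolution a b z u) :
    IsSolution (fun n => a (-n - 1)) (fun n => b (-n)) z (fun n => u (-n)) := by
  intro n
  have h2 := h (-n)
  beta_reduce
  ring_nf
  ring_nf at h2
  linear_combination h2

lemma refl_sol' (h : IsSolution (fun n => a (-n - 1)) (fun n => b (-n)) z u) :
    IsSolution a b z (fun n => u (-n)) := by
  intro n
  have h2 := h (-n)
  beta_reduce at h2 ⊢
  ring_nf
  ring_nf at h2
  linear_combination h2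

lemma l2minus_refl (u : ℤ → ℂ) : L2AtMinus (fun n => u (-n)) ↔ L2AtPlus u := by
  unfold L2AtMinus L2AtPlus
  constructor <;> intro h <;> exact h.congr (fun k => by simp)

end Refl

end Weyl

/-- Existence, uniqueness up to scalars, and nonvanishing of Weyl solutions at `±∞`. -/
theorem stmt7
    (a b : ℤ → ℝ) (ha : ∀ n, 0 < a n) (hab : ∃ C : ℝ, ∀ n, a n + |b n| ≤ C) :
    ∀ z : ℂ, z.im ≠ 0 →
      -- existence of a nonzero solution which is `ℓ²` at `+∞`
      ((∃ u : ℤ → ℂ, u ≠ 0 ∧ IsSolution a b z u ∧ L2AtPlus u) ∧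
      -- uniqueness up to scalar multiples
      (∀ u v : ℤ → ℂ, u ≠ 0 → IsSolution a b z u → L2AtPlus u →
        v ≠ 0 → IsSolution a b z v → L2AtPlus v → ∃ c : ℂ, v = fun n => c * u n) ∧
      -- nonvanishing
      (∀ u : ℤ → ℂ, u ≠ 0 → IsSolution a b z u → L2AtPlus u → ∀ n : ℤ, u n ≠ 0) ∧
      -- unique normalized solution
      (∃! u : ℤ → ℂ, IsSolution a b z u ∧ L2AtPlus u ∧ u 0 = 1)) ∧
      -- and the analogues at `-∞`
      ((∃ u : ℤ → ℂ, u ≠ 0 ∧ IsSolution a b z u ∧ L2AtMinus u) ∧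
      (∀ u v : ℤ → ℂ, u ≠ 0 → IsSolution a b z u → L2AtMinus u →
        v ≠ 0 → IsSolution a b z v → L2AtMinus v → ∃ c : ℂ, v = fun n => c * u n) ∧
      (∀ u : ℤ → ℂ, u ≠ 0 → IsSolution a b z u → L2AtMinus u → ∀ n : ℤ, u n ≠ 0) ∧
      (∃! u : ℤ → ℂ, IsSolution a b z u ∧ L2AtMinus u ∧ u 0 = 1)) := by
  obtain ⟨C, hC⟩ := hab
  have hCa : ∀ n, a n ≤ C := fun n => by have h1 := hC n; have h2 := abs_nonneg (b n); linarith
  have hCb : ∀ n, |b n| ≤ C := fun n => by have h1 := hC n; have h2 := ha n; linarith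
  intro z hz
  constructor
  · exact Weyl.master a b ha C hCa hCb z hz
  · obtain ⟨ex', uniq', nv', norm'⟩ := Weyl.master (fun n => a (-n - 1)) (fun n => b (-n))
      (fun n => ha _) C (fun n => hCa _) (fun n => hCb _) z hz
    refine ⟨?_, ?_, ?_, ?_⟩
    · obtain ⟨v, hv0, hvsol, hvl2⟩ := ex'
      refine ⟨fun n => v (-n), ?_, Weyl.refl_sol' hvsol, (Weyl.l2minus_refl v).mpr hvl2⟩
      intro h
      apply hv0
      funext n
      have := congrFun h (-n)
      simpa using this
    · intro u v hu0 hus hul2 hv0 hvs hvl2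
      have nzu : (fun n => u (-n)) ≠ 0 := by
        intro h
        apply hu0
        funext n
        have := congrFun h (-n)
        simpa using this
      have nzv : (fun n => v (-n)) ≠ 0 := by
        intro h
        apply hv0
        funext n
        have := congrFun h (-n)
        simpa using this
      obtain ⟨c, hc⟩ := uniq' (fun n => u (-n)) (fun n => v (-n)) nzu (Weyl.refl_sol hus) hul2
        nzv (Weyl.refl_sol hvs) hvl2
      refine ⟨c, funext fun n => ?_⟩
      have := congrFun hc (-n)
      simpa using this
    · intro u hu0 hus hul2 n
      have nzu : (fun n => u (-n)) ≠ 0 := by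
        intro h
        apply hu0
        funext m
        have := congrFun h (-m)
        simpa using this
      have := nv' (fun m => u (-m)) nzu (Weyl.refl_sol hus) hul2 (-n)
      simpa using this
    · obtain ⟨w, ⟨hw1, hw2, hw3⟩, hwu⟩ := norm'
      refine ⟨fun n => w (-n), ⟨Weyl.refl_sol' hw1, (Weyl.l2minus_refl w).mpr hw2,
        by simpa using hw3⟩, ?_⟩
      intro y ⟨hy1, hy2, hy3⟩
      have h5 := hwu (fun n => y (-n)) ⟨Weyl.refl_sol hy1, hy2, by simpa using hy3⟩
      funext n
      have := congrFun h5 (-n)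
      simpa using this
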